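/- Let J be a 2-torsion free and (n−1)-torsion free Jordan ring with nontrivial idempotent e satisfying conditions (i)–(iii), and let D : J → J be an n-multiplicative derivation with D(e) = 0. Then D preserves each Peirce component: D(J_i) ⊆ J_i for i ∈ {1, 1/2, 0}. -/

import Mathlib

/-- Peirce 1-component relative to `e`: elements `x` with `e*x = x`. -/
def peirce1 {J : Type*} [Mul J] (e : J) : Set J := {x | e * x = x}

/-- Peirce 1/2-component relative to `e`: elements `x` with `e*x = (1/2)x`, i.e. `e*x + e*x = x`. -/
def peirceHalf {J : Type*} [Mul J] [Add J] (e : J) : Set J := {x | e * x + e * x = x}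

/-- Peirce 0-component relative to `e`: elements `x` with `e*x = 0`. -/
def peirce0 {J : Type*} [Mul J] [Zero J] (e : J) : Set J := {x | e * x = 0}

/-- The right-normed nonassociative monomial `x₁(x₂(⋯(x_{n-1}x_n)⋯))` on a list of arguments. -/
def rnm {J : Type*} [Mul J] [Zero J] : List J → J
  | [] => 0
  | [x] => x
  | x :: y :: l => x * rnm (y :: l)

section ListLemmas
variable {J : Type*} [NonUnitalNonAssocCommRing J]

lemma rnm_cons (x : J) (l : List J) (h : l ≠ []) : rnm (x :: l) = x * rnm l := by
  cases l with
  | nil => exact absurd rfl h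
  | cons y t => rfl

lemma rnm_of_zero_mem : ∀ (l : List J), (0:J) ∈ l → rnm l = 0 := by
  intro l
  induction l with
  | nil => intro h; simp at h
  | cons x t ih =>
    intro h
    cases t with
    | nil =>
      simp at h
      simp [rnm, h]
    | cons y s =>
      rcases List.mem_cons.mp h with h | h
      · rw [rnm_cons _ _ (by simp), ← h, zero_mul]
      · rw [rnm_cons _ _ (by simp), ih h, mul_zero]

lemma zero_mem_set : ∀ (l : List J) (i : ℕ), i < l.length → (0:J) ∈ l.set i 0 := by
  intro l
  induction l with
  | nil => intro i h; simp at h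
  | cons x t ih =>
    intro i h
    cases i with
    | zero => simp
    | succ j =>
      rw [List.set_cons_succ]
      exact List.mem_cons_of_mem _ (ih j (by simpa using h))

lemma rnm_replicate (e : J) (hid : e * e = e) : ∀ k, rnm (List.replicate (k+1) e) = e := by
  intro k
  induction k with
  | zero => rfl
  | succ m ih =>
    rw [List.replicate_succ, rnm_cons _ _ (by simp), ih, hid]

def lpow (e : J) : ℕ → J → J
  | 0, z => z
  | k+1, z => e * lpow e k z

lemma rnm_repl_append (e x y : J) : ∀ k, rnm (List.replicate k e ++ [x, y]) = lpow e k (x*y) := by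
  intro k
  induction k with
  | zero => rfl
  | succ m ih =>
    rw [List.replicate_succ, List.cons_append, rnm_cons _ _ (by simp), ih]
    rfl

lemma getD_repl_lt (e : J) : ∀ (k i : ℕ), i < k → (List.replicate k e).getD i 0 = e := by
  intro k
  induction k with
  | zero => intro i h; omega
  | succ m ih =>
    intro i h
    cases i with
    | zero => rfl
    | succ j => rw [List.replicate_succ, List.getD_cons_succ]; exact ih j (by omega)

lemma getD_repl_append_lt (e : J) (l : List J) : ∀ (k i : ℕ), i < k →
    (List.replicate k e ++ l).getD i 0 = e := by
  intro k
  induction k with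
  | zero => intro i h; omega
  | succ m ih =>
    intro i h
    cases i with
    | zero => rfl
    | succ j =>
      rw [List.replicate_succ, List.cons_append, List.getD_cons_succ]
      exact ih j (by omega)

lemma getD_repl_append (e : J) (l : List J) : ∀ (k i : ℕ),
    (List.replicate k e ++ l).getD (k+i) 0 = l.getD i 0 := by
  intro k
  induction k with
  | zero => intro i; simp
  | succ m ih =>
    intro i
    rw [List.replicate_succ, List.cons_append]
    have : m + 1 + i = (m + i) + 1 := by omega
    rw [this, List.getD_cons_succ]
    exact ih i

lemma set_repl_append (e v : J) (l : List J) : ∀ (k i : ℕ),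
    (List.replicate k e ++ l).set (k+i) v = List.replicate k e ++ l.set i v := by
  intro k
  induction k with
  | zero => intro i; simp
  | succ m ih =>
    intro i
    rw [List.replicate_succ, List.cons_append]
    have : m + 1 + i = (m + i) + 1 := by omega
    rw [this, List.set_cons_succ, ih]
    simp [List.replicate_succ]

lemma set_repl_append_lt (e : J) (l : List J) (k i : ℕ) (h : i < k) :
    (0:J) ∈ (List.replicate k e ++ l).set i (0:J) := by
  apply zero_mem_set
  simp [h]
  omega

end ListLemmas

/-- `d` is an `n`-multiplicative derivation (w.r.t. the right-normed monomial of degree `n`):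
`d(m(x₁,…,xₙ)) = Σᵢ m(x₁,…,d(xᵢ),…,xₙ)`. -/
def IsNDer {J : Type*} [NonUnitalNonAssocRing J] (n : ℕ) (d : J → J) : Prop :=
  ∀ l : List J, l.length = n →
    d (rnm l) = ∑ i ∈ Finset.range n, rnm (l.set i (d (l.getD i 0)))

section Core
variable {J : Type*} [NonUnitalNonAssocCommRing J]

lemma lpow_add (e : J) : ∀ (k : ℕ) (x y : J), lpow e k (x + y) = lpow e k x + lpow e k y := by
  intro k
  induction k with
  | zero => intro x y; rfl
  | succ m ih => intro x y; show e * lpow e m (x+y) = _; rw [ih, mul_add]; rfl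

lemma lpow_sub (e : J) : ∀ (k : ℕ) (x y : J), lpow e k (x - y) = lpow e k x - lpow e k y := by
  intro k
  induction k with
  | zero => intro x y; rfl
  | succ m ih => intro x y; show e * lpow e m (x-y) = _; rw [ih, mul_sub]; rfl

lemma lpow_mul_comm (e : J) : ∀ (k : ℕ) (z : J), lpow e k (e * z) = e * lpow e k z := by
  intro k
  induction k with
  | zero => intro z; rfl
  | succ m ih => intro z; show e * lpow e m (e*z) = _; rw [ih]; rfl

lemma lpow_fix (e : J) (w : J) (hw : e * w = w) : ∀ k, lpow e k w = w := by
  intro k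
  induction k with
  | zero => rfl
  | succ m ih => show e * lpow e m w = w; rw [ih, hw]

/-- Fact A : `D (x*e) = D x * e`. -/
lemma factA (m : ℕ) (e : J) (hid : e * e = e) (D : J → J) (hder : IsNDer (m+2) D)
    (hDe : D e = 0) (x : J) : D (x * e) = D x * e := by
  have hl : (x :: List.replicate (m+1) e).length = m + 2 := by simp
  have h := hder (x :: List.replicate (m+1) e) hl
  rw [rnm_cons _ _ (by simp), rnm_replicate e hid] at h
  rw [h, Finset.sum_range_succ']
  have h0 : rnm ((x :: List.replicate (m+1) e).set 0
      (D ((x :: List.replicate (m+1) e).getD 0 0))) = D x * e := by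
    rw [List.getD_cons_zero, List.set_cons_zero, rnm_cons _ _ (by simp), rnm_replicate e hid]
  rw [h0]
  have hz : ∀ i ∈ Finset.range (m+1), rnm ((x :: List.replicate (m+1) e).set (i+1)
      (D ((x :: List.replicate (m+1) e).getD (i+1) 0))) = 0 := by
    intro i hi
    rw [Finset.mem_range] at hi
    rw [List.getD_cons_succ, getD_repl_lt e _ _ hi, hDe, List.set_cons_succ]
    apply rnm_of_zero_mem
    exact List.mem_cons_of_mem _ (zero_mem_set _ _ (by simpa using hi))
  rw [Finset.sum_congr rfl hz]
  simp

lemma hD0 (m : ℕ) (D : J → J) (hder : IsNDer (m+2) D) : D (0 : J) = 0 := by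
  have hl : (List.replicate (m+2) (0:J)).length = m + 2 := by simp
  have h := hder (List.replicate (m+2) (0:J)) hl
  rw [rnm_of_zero_mem _ (by simp)] at h
  rw [h]
  apply Finset.sum_eq_zero
  intro i hi
  rw [Finset.mem_range] at hi
  apply rnm_of_zero_mem
  rcases Nat.eq_zero_or_pos i with h0 | h0
  · subst h0
    rw [List.replicate_succ, List.set_cons_zero]
    exact List.mem_cons_of_mem _ (by simp)
  · obtain ⟨j, rfl⟩ := Nat.exists_eq_add_of_le h0
    have hj : Nat.succ 0 + j = j + 1 := by omega
    rw [hj, List.replicate_succ, List.set_cons_succ]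
    exact List.mem_cons_self

/-- `D` commutes with left multiplication by `e`. -/
lemma hDL (m : ℕ) (e : J) (hid : e * e = e) (D : J → J) (hder : IsNDer (m+2) D)
    (hDe : D e = 0) : ∀ (k : ℕ) (x : J), D (lpow e k x) = lpow e k (D x) := by
  intro k
  induction k with
  | zero => intro x; rfl
  | succ j ih =>
    intro x
    show D (e * lpow e j x) = e * lpow e j (D x)
    rw [mul_comm e, factA m e hid D hder hDe, ih, mul_comm]

/-- The basic `Δ` identity : `lpow m (D(xy) - Dx·y - x·Dy) = 0`. -/
lemma delta0 (m : ℕ) (e : J) (hid : e * e = e) (D : J → J) (hder : IsNDer (m+2) D)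
    (hDe : D e = 0) (x y : J) :
    lpow e m (D (x * y) - (D x * y + x * D y)) = 0 := by
  have hl : (List.replicate m e ++ [x, y]).length = m + 2 := by simp
  have h := hder (List.replicate m e ++ [x, y]) hl
  rw [rnm_repl_append] at h
  rw [Finset.sum_range_succ, Finset.sum_range_succ] at h
  have hz : ∀ i ∈ Finset.range m, rnm ((List.replicate m e ++ [x, y]).set i
      (D ((List.replicate m e ++ [x, y]).getD i 0))) = 0 := by
    intro i hi
    rw [Finset.mem_range] at hi
    rw [getD_repl_append_lt e _ _ _ hi, hDe]
    exact rnm_of_zero_mem _ (set_repl_append_lt e _ _ _ hi)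
  rw [Finset.sum_congr rfl hz, Finset.sum_const_zero, zero_add] at h
  have hm : (List.replicate m e ++ [x, y]).getD m 0 = x := by
    have := getD_repl_append e [x,y] m 0
    simpa using this
  have hm1 : (List.replicate m e ++ [x, y]).getD (m+1) 0 = y := by
    have := getD_repl_append e [x,y] m 1
    simpa using this
  have hsm : (List.replicate m e ++ [x, y]).set m (D x) = List.replicate m e ++ [D x, y] := by
    have := set_repl_append e (D x) [x,y] m 0
    simpa using this
  have hsm1 : (List.replicate m e ++ [x, y]).set (m+1) (D y) = List.replicate m e ++ [x, D y] := by
    have := set_repl_append e (D y) [x,y] m 1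
    simpa using this
  rw [hm, hm1, hsm, hsm1, rnm_repl_append, rnm_repl_append] at h
  rw [hDL m e hid D hder hDe] at h
  rw [lpow_sub, h, lpow_add]
  abel

end Core

section Alg
variable {J : Type*} [NonUnitalNonAssocCommRing J]

/-- Linearized Jordan identity. -/
lemma lin1 (hJordan : ∀ x y : J, ((x * x) * y) * x = (x * x) * (y * x))
    (h2 : ∀ x : J, x + x = 0 → x = 0) (x z y : J) :
    ((x*z)*y)*x + ((x*z)*y)*x + ((x*x)*y)*z = (x*z)*(y*x) + (x*z)*(y*x) + (x*x)*(y*z) := by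
  rw [← sub_eq_zero]
  apply h2
  have hp := hJordan (x+z) y
  have hm := hJordan (x-z) y
  have hz := hJordan z y
  rw [← sub_eq_zero] at hp hm hz
  have key : (((x*z)*y)*x + ((x*z)*y)*x + ((x*x)*y)*z - ((x*z)*(y*x) + (x*z)*(y*x) + (x*x)*(y*z))) +
      (((x*z)*y)*x + ((x*z)*y)*x + ((x*x)*y)*z - ((x*z)*(y*x) + (x*z)*(y*x) + (x*x)*(y*z))) =
      ((((x+z)*(x+z))*y)*(x+z) - ((x+z)*(x+z))*(y*(x+z)))
      - ((((x-z)*(x-z))*y)*(x-z) - ((x-z)*(x-z))*(y*(x-z)))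
      - ((((z*z)*y)*z - (z*z)*(y*z)) + (((z*z)*y)*z - (z*z)*(y*z))) := by
    simp only [mul_add, add_mul, mul_sub, sub_mul]
    simp only [mul_comm]
    abel
  rw [key, hp, hm, hz]
  abel

/-- The operator identity `2L³ + L = 3L²` for `L = L_e`. -/
lemma opid (e : J) (hid : e * e = e)
    (hJordan : ∀ x y : J, ((x * x) * y) * x = (x * x) * (y * x))
    (h2 : ∀ x : J, x + x = 0 → x = 0) (z : J) :
    e*(e*(e*z)) + e*(e*(e*z)) + e*z = e*(e*z) + e*(e*z) + e*(e*z) := by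
  have h := lin1 hJordan h2 e z e
  simp only [hid] at h
  rw [mul_comm (e*z) e] at h
  rw [mul_comm (e*(e*z)) e] at h
  linear_combination (norm := abel1) h

/-- `J₁ · J½ ⊆ J½`. -/
lemma P1 (e : J) (hid : e * e = e)
    (hJordan : ∀ x y : J, ((x * x) * y) * x = (x * x) * (y * x))
    (h2 : ∀ x : J, x + x = 0 → x = 0) (u s : J) (hu : e*u = u) (hs : e*s + e*s = s) :
    e*(u*s) + e*(u*s) = u*s := by
  have h := lin1 hJordan h2 e u s
  simp only [hid, hu] at h
  rw [mul_comm (u*s) e, mul_comm s e, mul_comm s u, mul_comm (e*s) u] at h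
  have hZW : e*(u*s) = u*(e*s) := by linear_combination (norm := abel1) h
  rw [hZW, ← mul_add, hs]

lemma Qlem (e : J) (hid : e * e = e)
    (hJordan : ∀ x y : J, ((x * x) * y) * x = (x * x) * (y * x))
    (h2 : ∀ x : J, x + x = 0 → x = 0) (s : J) (hs : e*s + e*s = s) :
    e*(s*s) = e*(e*(s*s)) := by
  have h := lin1 hJordan h2 s e e
  simp only [hid] at h
  rw [mul_comm s e] at h
  rw [mul_comm (e*s) e] at h
  rw [mul_comm (e*(e*s)) s] at h
  rw [mul_comm (s*s) e] at h
  rw [mul_comm (e*(s*s)) e] at h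
  -- h : s*(e*(e*s)) + s*(e*(e*s)) + e*(e*(s*s)) = (e*s)*(e*s) + (e*s)*(e*s) + e*(s*s)
  have hs' : e*(e*s) + e*(e*s) = e*s := by rw [← mul_add, hs]
  have l1 : s*(e*(e*s)) + s*(e*(e*s)) = s*(e*s) := by rw [← mul_add, hs']
  have l2 : (e*s)*(e*s) + (e*s)*(e*s) = (e*s)*s := by rw [← mul_add, hs]
  rw [mul_comm (e*s) s] at l2
  linear_combination (norm := abel1) l1 - l2 - h

/-- `J½ · J½ ⊆ J₁ ⊕ J₀` in the form `E_{1/2}(s t) = 0`. -/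
lemma P2 (e : J) (hid : e * e = e)
    (hJordan : ∀ x y : J, ((x * x) * y) * x = (x * x) * (y * x))
    (h2 : ∀ x : J, x + x = 0 → x = 0) (s t : J) (hs : e*s + e*s = s) (ht : e*t + e*t = t) :
    e*(s*t) = e*(e*(s*t)) := by
  have hst : e*(s+t) + e*(s+t) = s + t := by
    simp only [mul_add]
    linear_combination (norm := abel1) hs + ht
  have hq := Qlem e hid hJordan h2 (s+t) hst
  have hq1 := Qlem e hid hJordan h2 s hs
  have hq2 := Qlem e hid hJordan h2 t ht
  simp only [mul_add, add_mul] at hq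
  rw [mul_comm t s] at hq
  rw [← sub_eq_zero]
  apply h2
  linear_combination (norm := abel1) hq - hq1 - hq2

lemma half_lpow_zero (e : J) : ∀ (k : ℕ) (w : J), (e*w + e*w = w) → lpow e k w = 0 → w = 0 := by
  intro k
  induction k with
  | zero => intro w _ h0; exact h0
  | succ j ih =>
    intro w hw h0
    have hv : lpow e j (e*w + e*w) = lpow e j w := congrArg _ hw
    rw [lpow_add, lpow_mul_comm] at hv
    have h0' : e * lpow e j w = 0 := h0
    rw [h0', add_zero] at hv
    exact ih w hw hv.symm

/-- If `L^k z = 0` then `L z = 0`. -/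
lemma LemP (e : J) (hid : e * e = e)
    (hJordan : ∀ x y : J, ((x * x) * y) * x = (x * x) * (y * x))
    (h2 : ∀ x : J, x + x = 0 → x = 0) :
    ∀ (k : ℕ) (z : J), lpow e k z = 0 → e * z = 0 := by
  intro k z h
  cases k with
  | zero =>
    have : z = 0 := h
    rw [this, mul_zero]
  | succ k =>
    have op := opid e hid hJordan h2
    -- the J₁-component of z vanishes
    have hz1fix : e * (e*(e*z) + e*(e*z) - e*z) = e*(e*z) + e*(e*z) - e*z := by
      simp only [mul_add, mul_sub]
      linear_combination (norm := abel1) op z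
    have hz1 : e*(e*z) + e*(e*z) - e*z = 0 := by
      rw [← lpow_fix e _ hz1fix (k+1)]
      simp only [lpow_add, lpow_sub, lpow_mul_comm]
      rw [h]
      simp
    -- the J½-component of z vanishes
    have hzhfix : e * (e*z + e*z + e*z + e*z - (e*(e*z) + e*(e*z) + e*(e*z) + e*(e*z)))
        + e * (e*z + e*z + e*z + e*z - (e*(e*z) + e*(e*z) + e*(e*z) + e*(e*z)))
        = e*z + e*z + e*z + e*z - (e*(e*z) + e*(e*z) + e*(e*z) + e*(e*z)) := by
      simp only [mul_add, mul_sub]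
      linear_combination (norm := abel1) - (op z) - (op z) - (op z) - (op z)
    have hzh : e*z + e*z + e*z + e*z - (e*(e*z) + e*(e*z) + e*(e*z) + e*(e*z)) = 0 := by
      apply half_lpow_zero e (k+1) _ hzhfix
      simp only [lpow_add, lpow_sub, lpow_mul_comm]
      rw [h]
      simp
    apply h2
    linear_combination (norm := abel1) hz1 + hz1 + hzh

end Alg

section Der
variable {J : Type*} [NonUnitalNonAssocCommRing J]

lemma hJ1D (m : ℕ) (e : J) (hid : e * e = e)
    (D : J → J) (hder : IsNDer (m+2) D) (hDe : D e = 0) (a : J) (ha : e*a = a) : e * D a = D a := by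
  have h := factA m e hid D hder hDe a
  rw [mul_comm a e, ha, mul_comm (D a) e] at h
  exact h.symm

lemma hJ0D (m : ℕ) (e : J) (hid : e * e = e)
    (D : J → J) (hder : IsNDer (m+2) D) (hDe : D e = 0) (a : J) (ha : e*a = 0) : e * D a = 0 := by
  have h := factA m e hid D hder hDe a
  rw [mul_comm a e, ha, hD0 m D hder, mul_comm (D a) e] at h
  exact h.symm

lemma hdagger (m : ℕ) (e : J) (hid : e * e = e)
    (hJordan : ∀ x y : J, ((x * x) * y) * x = (x * x) * (y * x))
    (h2 : ∀ x : J, x + x = 0 → x = 0)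
    (D : J → J) (hder : IsNDer (m+2) D) (hDe : D e = 0) (x y : J) : e*(D (x*y)) = e*(D x * y) + e*(x * D y) := by
  have h := LemP e hid hJordan h2 m _ (delta0 m e hid D hder hDe x y)
  rw [mul_sub, mul_add, sub_eq_zero] at h
  exact h

lemma hbL (m : ℕ) (e : J) (hid : e * e = e)
    (D : J → J) (hder : IsNDer (m+2) D) (hDe : D e = 0) (a : J) (ha : e*a + e*a = a) : D a = e * D (a+a) := by
  have h1 : e*(a+a) = a := by rw [mul_add]; exact ha
  have h := factA m e hid D hder hDe (a+a)
  rw [mul_comm (a+a) e, h1] at h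
  rw [h, mul_comm]

lemma hE0 (m : ℕ) (e : J) (hid : e * e = e)
    (hJordan : ∀ x y : J, ((x * x) * y) * x = (x * x) * (y * x))
    (h2 : ∀ x : J, x + x = 0 → x = 0)
    (D : J → J) (hder : IsNDer (m+2) D) (hDe : D e = 0) (a : J) (ha : e*a + e*a = a) :
    D a + (e*(e*(D a)) + e*(e*(D a))) = e*(D a) + e*(D a) + e*(D a) := by
  rw [hbL m e hid D hder hDe a ha]
  linear_combination (norm := abel1) opid e hid hJordan h2 (D (a+a))

lemma keylem (m : ℕ) (e : J) (hid : e * e = e)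
    (hJordan : ∀ x y : J, ((x * x) * y) * x = (x * x) * (y * x))
    (h2 : ∀ x : J, x + x = 0 → x = 0)
    (D : J → J) (hder : IsNDer (m+2) D) (hDe : D e = 0) (t a : J) (ht : e*t + e*t = t) (ha : e*a + e*a = a) :
    (e*(e*(D t)) + e*(e*(D t)) - e*(D t)) * a
      + t * (e*(e*(D a)) + e*(e*(D a)) - e*(D a)) = 0 := by
  have op := opid e hid hJordan h2
  have hu1fix : e * (e*(e*(D t)) + e*(e*(D t)) - e*(D t))
      = e*(e*(D t)) + e*(e*(D t)) - e*(D t) := by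
    simp only [mul_add, mul_sub]
    linear_combination (norm := abel1) op (D t)
  have hb1fix : e * (e*(e*(D a)) + e*(e*(D a)) - e*(D a))
      = e*(e*(D a)) + e*(e*(D a)) - e*(D a) := by
    simp only [mul_add, mul_sub]
    linear_combination (norm := abel1) op (D a)
  have hu0 := hE0 m e hid hJordan h2 D hder hDe t ht
  have hb0 := hE0 m e hid hJordan h2 D hder hDe a ha
  have huhfix : e*(D t - (e*(e*(D t)) + e*(e*(D t)) - e*(D t)))
      + e*(D t - (e*(e*(D t)) + e*(e*(D t)) - e*(D t)))
      = D t - (e*(e*(D t)) + e*(e*(D t)) - e*(D t)) := by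
    simp only [mul_add, mul_sub]
    linear_combination (norm := abel1) - hu0 - op (D t) - op (D t)
  have hbhfix : e*(D a - (e*(e*(D a)) + e*(e*(D a)) - e*(D a)))
      + e*(D a - (e*(e*(D a)) + e*(e*(D a)) - e*(D a)))
      = D a - (e*(e*(D a)) + e*(e*(D a)) - e*(D a)) := by
    simp only [mul_add, mul_sub]
    linear_combination (norm := abel1) - hb0 - op (D a) - op (D a)
  have hp2 : e*(t*a) = e*(e*(t*a)) := P2 e hid hJordan h2 t a ht ha
  have hDp1 : e * D (e*(t*a)) = D (e*(t*a)) :=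
    hJ1D m e hid D hder hDe _ hp2.symm
  have hdp : D (e*(t*a)) = e * D (t*a) := by
    rw [mul_comm e (t*a), factA m e hid D hder hDe, mul_comm]
  have hM0 := hdagger m e hid hJordan h2 D hder hDe t a
  have M : D (e*(t*a)) = e*((e*(e*(D t)) + e*(e*(D t)) - e*(D t))*a)
      + e*((D t - (e*(e*(D t)) + e*(e*(D t)) - e*(D t)))*a)
      + (e*(t*(e*(e*(D a)) + e*(e*(D a)) - e*(D a)))
        + e*(t*(D a - (e*(e*(D a)) + e*(e*(D a)) - e*(D a))))) := by
    rw [hdp, hM0]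
    have e1 : D t * a = (e*(e*(D t)) + e*(e*(D t)) - e*(D t))*a
        + (D t - (e*(e*(D t)) + e*(e*(D t)) - e*(D t)))*a := by
      rw [← add_mul]
      congr 1
      abel
    have e2 : t * D a = t*(e*(e*(D a)) + e*(e*(D a)) - e*(D a))
        + t*(D a - (e*(e*(D a)) + e*(e*(D a)) - e*(D a))) := by
      rw [← mul_add]
      congr 1
      abel
    rw [e1, e2, mul_add, mul_add]
  have LM := congrArg (fun w => e * w) M
  simp only [mul_add] at LM
  rw [hDp1] at LM
  have hMLM := M.symm.trans LM
  have hq := P1 e hid hJordan h2 (e*(e*(D t)) + e*(e*(D t)) - e*(D t)) a hu1fix ha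
  have hq' := P1 e hid hJordan h2 (e*(e*(D a)) + e*(e*(D a)) - e*(D a)) t hb1fix ht
  rw [mul_comm (e*(e*(D a)) + e*(e*(D a)) - e*(D a)) t] at hq'
  have hr := P2 e hid hJordan h2 (D t - (e*(e*(D t)) + e*(e*(D t)) - e*(D t))) a huhfix ha
  have hr' := P2 e hid hJordan h2 t (D a - (e*(e*(D a)) + e*(e*(D a)) - e*(D a))) ht hbhfix
  have hLq := congrArg (fun w => e * w) hq
  simp only [mul_add] at hLq
  have hLq' := congrArg (fun w => e * w) hq'
  simp only [mul_add] at hLq'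
  linear_combination (norm := abel1) (hMLM + hMLM + hMLM + hMLM)
    - (hr + hr + hr + hr) - (hr' + hr' + hr' + hr')
    - hq + hLq + hLq - hq' + hLq' + hLq'

end Der

theorem nDer_preserves_peirce {n : ℕ} (hn : 2 ≤ n) {J : Type*} [NonUnitalNonAssocCommRing J]
    (hJordan : ∀ x y : J, ((x * x) * y) * x = (x * x) * (y * x))
    (h2 : ∀ x : J, x + x = 0 → x = 0)
    (hn1 : ∀ x : J, (n - 1) • x = 0 → x = 0)
    (e : J) (hid : e * e = e) (hne : e ≠ 0) (hnu : ∃ x : J, e * x ≠ x)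
    (hcond1 : ∀ a ∈ peirce1 e, (∀ t ∈ peirceHalf e, t * a = 0) → a = 0)
    (hcond1' : ∀ a ∈ peirce0 e, (∀ t ∈ peirceHalf e, t * a = 0) → a = 0)
    (hcond2 : ∀ a ∈ peirce0 e, (∀ t ∈ peirce0 e, t * a = 0) → a = 0)
    (hcond3 : ∀ a ∈ peirceHalf e, (∀ t ∈ peirce0 e, t * a = 0) → a = 0)
    (D : J → J) (hder : IsNDer n D) (hDe : D e = 0) :
    (∀ a ∈ peirce1 e, D a ∈ peirce1 e) ∧
    (∀ a ∈ peirceHalf e, D a ∈ peirceHalf e) ∧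
    (∀ a ∈ peirce0 e, D a ∈ peirce0 e) := by
  obtain ⟨m, rfl⟩ : ∃ m, n = m + 2 := ⟨n - 2, by omega⟩
  refine ⟨?_, ?_, ?_⟩
  · intro a ha
    have ha' : e * a = a := ha
    show e * D a = D a
    exact hJ1D m e hid D hder hDe a ha'
  · intro a ha
    have ha' : e*a + e*a = a := ha
    have op := opid e hid hJordan h2
    have hb1fix : e * (e*(e*(D a)) + e*(e*(D a)) - e*(D a))
        = e*(e*(D a)) + e*(e*(D a)) - e*(D a) := by
      simp only [mul_add, mul_sub]
      linear_combination (norm := abel1) op (D a)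
    have hb1mem : (e*(e*(D a)) + e*(e*(D a)) - e*(D a)) ∈ peirce1 e := hb1fix
    have haa : e*(a+a) + e*(a+a) = a + a := by
      simp only [mul_add]
      linear_combination (norm := abel1) ha' + ha'
    have hc : e*(e*(D a)) + e*(e*(D a)) - e*(D a)
        = e*(e*(D (a+a))) + e*(e*(D (a+a))) - e*(D (a+a)) := by
      rw [hbL m e hid D hder hDe a ha']
      linear_combination (norm := abel1) op (D (a+a))
    have htb1 : ∀ t ∈ peirceHalf e, t * (e*(e*(D a)) + e*(e*(D a)) - e*(D a)) = 0 := by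
      intro t ht
      have ht' : e*t + e*t = t := ht
      have k1 := keylem m e hid hJordan h2 D hder hDe t a ht' ha'
      have k2 := keylem m e hid hJordan h2 D hder hDe t (a+a) ht' haa
      rw [← hc] at k2
      rw [mul_add] at k2
      linear_combination (norm := abel1) k1 + k1 - k2
    have hb1zero := hcond1 _ hb1mem htb1
    show e * D a + e * D a = D a
    have he0 := hE0 m e hid hJordan h2 D hder hDe a ha'
    linear_combination (norm := abel1) hb1zero - he0
  · intro a ha
    have ha' : e * a = 0 := ha
    show e * D a = 0
    exact hJ0D m e hid D hder hDe a ha'
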